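/- Pivotality conditioned on a subset (case n = 1 of the joint-pivotality lemma): let E be a finite set, h : {-1,1}^E → {0,1}, J ⊆ E, and W ⊆ E with W ∩ J = ∅. Then ∑_{S : S ∩ J ≠ ∅, S ∩ W = ∅} ĥ(S)² ≤ 4 · E[ P[Piv_J(h) | ω_{|E∖W}]² ]. -/

import Mathlib

open Finset
open scoped Classical

noncomputable section

/-- Expectation with respect to the uniform product measure on `{-1,1}^E`. -/
def cubeExp {E : Type*} [Fintype E] [DecidableEq E] (f : (E → Bool) → ℝ) : ℝ :=
  (∑ ω : E → Bool, f ω) / 2 ^ Fintype.card E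

/-- The Walsh character `χ_S(ω) = ∏_{i ∈ S} ω(i)` (with `true ↦ +1`, `false ↦ -1`). -/
def walsh {E : Type*} (S : Finset E) (ω : E → Bool) : ℝ :=
  ∏ i ∈ S, (if ω i then (1 : ℝ) else -1)

/-- The Fourier–Walsh coefficient `ĥ(S) = E[h χ_S]`. -/
def walshCoeff {E : Type*} [Fintype E] [DecidableEq E]
    (h : (E → Bool) → ℝ) (S : Finset E) : ℝ :=
  cubeExp (fun ω => h ω * walsh S ω)

/-- The conditional expectation of `h` given the coordinates outside `W`,
obtained by averaging over the coordinates in `W`. -/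
def condExpOutside {E : Type*} [Fintype E] [DecidableEq E]
    (W : Finset E) (h : (E → Bool) → ℝ) (ω : E → Bool) : ℝ :=
  (∑ τ : E → Bool, h (fun i => if i ∈ W then τ i else ω i)) / 2 ^ Fintype.card E

/-- `Piv_J(h)`: the event that `h` can be changed by modifying coordinates only inside `J`. -/
def pivotal {E : Type*} (J : Finset E) (h : (E → Bool) → ℝ) (ω : E → Bool) : Prop :=
  ∃ ω' : E → Bool, (∀ i, i ∉ J → ω' i = ω i) ∧ h ω' ≠ h ω


section Aux
variable {E : Type*} [Fintype E] [DecidableEq E]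

lemma sum_walsh (U : Finset E) :
    ∑ ρ : E → Bool, walsh U ρ = if U = ∅ then (2:ℝ) ^ Fintype.card E else 0 := by
  have h1 : ∀ ρ : E → Bool, walsh U ρ
      = ∏ i : E, (if i ∈ U then (if ρ i then (1:ℝ) else -1) else 1) := by
    intro ρ
    rw [Finset.prod_ite_mem, univ_inter, walsh]
  simp_rw [h1]
  rw [← Fintype.piFinset_univ, ← Finset.prod_univ_sum (fun _ => (univ : Finset Bool))
    (fun i b => if i ∈ U then (if b then (1:ℝ) else -1) else 1)]
  rcases eq_or_ne U ∅ with hU | hU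
  · simp [hU]
  · rw [if_neg hU]
    obtain ⟨i0, hi0⟩ := Finset.nonempty_iff_ne_empty.mpr hU
    apply Finset.prod_eq_zero (Finset.mem_univ i0)
    simp [hi0]


lemma sum_walsh_mul (ω ω' : E → Bool) :
    ∑ S : Finset E, walsh S ω * walsh S ω'
      = if ω = ω' then (2:ℝ) ^ Fintype.card E else 0 := by
  have h1 : ∀ S : Finset E, walsh S ω * walsh S ω'
      = ∏ i ∈ S, ((if ω i then (1:ℝ) else -1) * (if ω' i then (1:ℝ) else -1)) := by
    intro S; rw [walsh, walsh, ← Finset.prod_mul_distrib]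
  simp_rw [h1]
  have := Finset.prod_add
    (fun i : E => (if ω i then (1:ℝ) else -1) * (if ω' i then (1:ℝ) else -1))
    (fun _ : E => (1:ℝ)) (univ : Finset E)
  simp only [Finset.prod_const_one, mul_one, Finset.powerset_univ] at this
  rw [← this]
  rcases eq_or_ne ω ω' with rfl | hne
  · rw [if_pos rfl]
    have h2 : ∏ i : E, (((if ω i = true then (1:ℝ) else -1) * if ω i = true then 1 else -1) + 1)
        = ∏ _i : E, (2:ℝ) := by
      apply Finset.prod_congr rfl
      intro i _
      rcases Bool.dichotomy (ω i) with hb | hb <;> simp [hb] <;> norm_num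
    rw [h2, Finset.prod_const, Finset.card_univ]
  · rw [if_neg hne]
    obtain ⟨i0, hi0⟩ : ∃ i, ω i ≠ ω' i := by
      by_contra hc; push_neg at hc; exact hne (funext hc)
    apply Finset.prod_eq_zero (Finset.mem_univ i0)
    rcases Bool.dichotomy (ω i0) with hb | hb <;> rcases Bool.dichotomy (ω' i0) with hb' | hb' <;>
      simp [hb, hb'] at hi0 ⊢ <;> norm_num

lemma parseval (f : (E → Bool) → ℝ) :
    ∑ S : Finset E, walshCoeff f S ^ 2 = cubeExp (fun ω => f ω ^ 2) := by
  have hN : (0:ℝ) < 2 ^ Fintype.card E := by positivity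
  have key : ∑ S : Finset E, (∑ ω : E → Bool, f ω * walsh S ω) ^ 2
      = (∑ ω : E → Bool, f ω ^ 2) * 2 ^ Fintype.card E := by
    have h1 : ∀ S : Finset E, (∑ ω : E → Bool, f ω * walsh S ω) ^ 2
        = ∑ ω : E → Bool, ∑ ω' : E → Bool,
            (f ω * f ω') * (walsh S ω * walsh S ω') := by
      intro S
      rw [sq, Finset.sum_mul_sum]
      exact Finset.sum_congr rfl fun ω _ => Finset.sum_congr rfl fun ω' _ => by ring
    simp_rw [h1]
    rw [Finset.sum_comm]
    have h2 : ∀ ω : E → Bool,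
        ∑ S : Finset E, ∑ ω' : E → Bool, (f ω * f ω') * (walsh S ω * walsh S ω')
          = f ω ^ 2 * 2 ^ Fintype.card E := by
      intro ω
      rw [Finset.sum_comm]
      have h3 : ∀ ω' : E → Bool,
          ∑ S : Finset E, (f ω * f ω') * (walsh S ω * walsh S ω')
            = (f ω * f ω') * (if ω = ω' then (2:ℝ) ^ Fintype.card E else 0) := by
        intro ω'
        rw [← Finset.mul_sum, sum_walsh_mul]
      simp_rw [h3, mul_ite, mul_zero]
      rw [Finset.sum_ite_eq (univ : Finset (E → Bool)) ω (fun ω' => f ω * f ω' * 2 ^ Fintype.card E)]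
      simp [sq]
    simp_rw [h2]
    rw [← Finset.sum_mul]
  simp only [walshCoeff, cubeExp, div_pow]
  rw [← Finset.sum_div, key]
  field_simp

/-- The swap-on-`W` equivalence on pairs of configurations. -/
def swapOn (W : Finset E) : (E → Bool) × (E → Bool) ≃ (E → Bool) × (E → Bool) where
  toFun p := (fun i => if i ∈ W then p.2 i else p.1 i, fun i => if i ∈ W then p.1 i else p.2 i)
  invFun p := (fun i => if i ∈ W then p.2 i else p.1 i, fun i => if i ∈ W then p.1 i else p.2 i)
  left_inv p := by
    ext i <;> by_cases hi : i ∈ W <;> simp [hi]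
  right_inv p := by
    ext i <;> by_cases hi : i ∈ W <;> simp [hi]

lemma condExp_coeff (W : Finset E) (f : (E → Bool) → ℝ) (S : Finset E) :
    walshCoeff (condExpOutside W f) S
      = if S ∩ W = ∅ then walshCoeff f S else 0 := by
  have hN : (0:ℝ) < 2 ^ Fintype.card E := by positivity
  -- split walsh S ω into parts
  have hsplit : ∀ ω τ : E → Bool, walsh S ω
      = walsh (S \ W) (fun i => if i ∈ W then τ i else ω i)
        * walsh (S ∩ W) (fun i => if i ∈ W then ω i else τ i) := by
    intro ω τ
    unfold walsh
    beta_reduce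
    have e1 : (∏ i ∈ S \ W, (if (if i ∈ W then τ i else ω i) then (1:ℝ) else -1))
        = ∏ i ∈ S \ W, (if ω i then (1:ℝ) else -1) := by
      apply Finset.prod_congr rfl
      intro i hi
      rw [Finset.mem_sdiff] at hi
      rw [if_neg hi.2]
    have e2 : (∏ i ∈ S ∩ W, (if (if i ∈ W then ω i else τ i) then (1:ℝ) else -1))
        = ∏ i ∈ S ∩ W, (if ω i then (1:ℝ) else -1) := by
      apply Finset.prod_congr rfl
      intro i hi
      rw [Finset.mem_inter] at hi
      rw [if_pos hi.2]
    rw [e1, e2, ← Finset.prod_union (Finset.disjoint_sdiff_inter S W), Finset.sdiff_union_inter]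
  -- main identity
  have main : ∑ ω : E → Bool, (∑ τ : E → Bool, f (fun i => if i ∈ W then τ i else ω i)) * walsh S ω
      = (∑ σ : E → Bool, f σ * walsh (S \ W) σ) * (∑ ρ : E → Bool, walsh (S ∩ W) ρ) := by
    rw [Finset.sum_mul_sum]
    simp_rw [Finset.sum_mul]
    have l1 : ∑ p : (E → Bool) × (E → Bool),
        (f fun i => if i ∈ W then p.2 i else p.1 i) * walsh S p.1
        = ∑ x : E → Bool, ∑ y : E → Bool,
            (f fun i => if i ∈ W then y i else x i) * walsh S x :=
      Fintype.sum_prod_type _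
    have l2 : ∑ p : (E → Bool) × (E → Bool),
        f p.1 * walsh (S \ W) p.1 * walsh (S ∩ W) p.2
        = ∑ x : E → Bool, ∑ y : E → Bool, f x * walsh (S \ W) x * walsh (S ∩ W) y :=
      Fintype.sum_prod_type _
    rw [← l1, ← l2]
    refine Fintype.sum_equiv (swapOn W) _ _ (fun p => ?_)
    simp only [swapOn, Equiv.coe_fn_mk]
    rw [hsplit p.1 p.2]
    ring
  have expand : walshCoeff (condExpOutside W f) S
      = ((∑ σ : E → Bool, f σ * walsh (S \ W) σ) * (∑ ρ : E → Bool, walsh (S ∩ W) ρ))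
        / 2 ^ Fintype.card E / 2 ^ Fintype.card E := by
    unfold walshCoeff cubeExp condExpOutside
    rw [← main]
    have e : ∑ ω : E → Bool,
        (∑ τ : E → Bool, f fun i => if i ∈ W then τ i else ω i) / 2 ^ Fintype.card E * walsh S ω
        = (∑ ω : E → Bool,
            (∑ τ : E → Bool, f fun i => if i ∈ W then τ i else ω i) * walsh S ω)
          / 2 ^ Fintype.card E := by
      simp_rw [div_mul_eq_mul_div]
      rw [← Finset.sum_div]
    rw [e, div_div]
  rw [expand, sum_walsh]
  rcases eq_or_ne (S ∩ W) ∅ with hSW | hSW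
  · rw [if_pos hSW, if_pos hSW]
    rw [Finset.sdiff_eq_self_iff_disjoint.mpr (Finset.disjoint_iff_inter_eq_empty.mpr hSW)]
    unfold walshCoeff cubeExp
    field_simp
  · rw [if_neg hSW, if_neg hSW, mul_zero, zero_div, zero_div]


lemma walshCoeff_sub (f g : (E → Bool) → ℝ) (S : Finset E) :
    walshCoeff (fun ω => f ω - g ω) S = walshCoeff f S - walshCoeff g S := by
  unfold walshCoeff cubeExp
  rw [← sub_div, ← Finset.sum_sub_distrib]
  congr 1
  apply Finset.sum_congr rfl
  intro ω _
  ring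

end Aux

/-- Case `n = 1` of the joint-pivotality lemma: for `h : {-1,1}^E → {0,1}`, `J ⊆ E` and
`W` disjoint from `J`,
`∑_{S : S ∩ J ≠ ∅, S ∩ W = ∅} ĥ(S)² ≤ 4 E[ P[Piv_J(h) | ω_{|E∖W}]² ]`. -/
theorem spectral_mass_le_condPivotal_sq {E : Type*} [Fintype E] [DecidableEq E]
    (h : (E → Bool) → ℝ) (h01 : ∀ ω, h ω = 0 ∨ h ω = 1)
    (J W : Finset E) (hJW : W ∩ J = ∅) :
    ∑ S ∈ Finset.univ.filter
        (fun S : Finset E => (S ∩ J).Nonempty ∧ S ∩ W = ∅),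
        walshCoeff h S ^ 2
      ≤ 4 * cubeExp (fun ω =>
          condExpOutside W (fun ω' => if pivotal J h ω' then 1 else 0) ω ^ 2) := by
  classical
  set n := Fintype.card E with hn
  have hN : (0:ℝ) < 2 ^ n := by positivity
  set f : (E → Bool) → ℝ := fun ω => h ω - condExpOutside J h ω with hf
  set g : (E → Bool) → ℝ := condExpOutside W f with hg
  set p : (E → Bool) → ℝ :=
    condExpOutside W (fun ω' => if pivotal J h ω' then 1 else 0) with hp
  -- coefficients of g
  have hcoeff : ∀ S : Finset E, walshCoeff g S
      = if (S ∩ J).Nonempty ∧ S ∩ W = ∅ then walshCoeff h S else 0 := by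
    intro S
    rw [hg, condExp_coeff]
    have hfc : walshCoeff f S
        = walshCoeff h S - (if S ∩ J = ∅ then walshCoeff h S else 0) := by
      rw [hf, walshCoeff_sub, condExp_coeff]
    by_cases hSW : S ∩ W = ∅
    · rw [if_pos hSW, hfc]
      by_cases hSJ : S ∩ J = ∅
      · rw [if_pos hSJ, sub_self, if_neg]
        rintro ⟨hne, -⟩
        exact Finset.nonempty_iff_ne_empty.mp hne hSJ
      · rw [if_neg hSJ, sub_zero, if_pos ⟨Finset.nonempty_iff_ne_empty.mpr hSJ, hSW⟩]
    · rw [if_neg hSW, if_neg (by rintro ⟨-, hc⟩; exact hSW hc)]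
  -- step 1 : the spectral sum equals ∑_S ĝ(S)²
  have step1 : ∑ S ∈ Finset.univ.filter
        (fun S : Finset E => (S ∩ J).Nonempty ∧ S ∩ W = ∅), walshCoeff h S ^ 2
      = ∑ S : Finset E, walshCoeff g S ^ 2 := by
    rw [Finset.sum_filter]
    apply Finset.sum_congr rfl
    intro S _
    rw [hcoeff S]
    by_cases hPS : (S ∩ J).Nonempty ∧ S ∩ W = ∅
    · rw [if_pos hPS, if_pos hPS]
    · rw [if_neg hPS, if_neg hPS]
      norm_num
  -- pointwise bound on f
  have hfb : ∀ ω, |f ω| ≤ (if pivotal J h ω then (1:ℝ) else 0) := by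
    intro ω
    by_cases hpiv : pivotal J h ω
    · rw [if_pos hpiv]
      have hb : ∀ τ : E → Bool, (0:ℝ) ≤ h τ ∧ h τ ≤ 1 := by
        intro τ; rcases h01 τ with h0 | h0 <;> rw [h0] <;> norm_num
      have hlow : (0:ℝ) ≤ condExpOutside J h ω := by
        unfold condExpOutside
        apply div_nonneg _ (by positivity)
        exact Finset.sum_nonneg fun τ _ => (hb _).1
      have hhigh : condExpOutside J h ω ≤ 1 := by
        unfold condExpOutside
        rw [div_le_one (by positivity)]
        calc ∑ τ : E → Bool, h (fun i => if i ∈ J then τ i else ω i)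
            ≤ ∑ _τ : E → Bool, (1:ℝ) := Finset.sum_le_sum fun τ _ => (hb _).2
          _ = (2:ℝ) ^ Fintype.card E := by
              rw [Finset.sum_const, Finset.card_univ, Fintype.card_fun,
                Fintype.card_bool, nsmul_eq_mul, mul_one]
              push_cast
              ring
      have := hb ω
      rw [abs_le, hf]
      constructor <;> simp only [] <;> linarith [this.1, this.2]
    · rw [if_neg hpiv]
      have hconst : ∀ τ : E → Bool,
          h (fun i => if i ∈ J then τ i else ω i) = h ω := by
        intro τ
        by_contra hne
        exact hpiv ⟨_, fun i hi => by simp [hi], hne⟩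
      have hce : condExpOutside J h ω = h ω := by
        unfold condExpOutside
        simp_rw [hconst]
        rw [Finset.sum_const, Finset.card_univ, Fintype.card_fun, Fintype.card_bool,
          nsmul_eq_mul]
        push_cast
        field_simp
      rw [hf]
      simp only [hce, sub_self, abs_zero, le_refl]
  -- pointwise bound on g
  have hgb : ∀ ω, |g ω| ≤ p ω := by
    intro ω
    rw [hg, hp]
    unfold condExpOutside
    rw [abs_div, abs_of_pos (by positivity : (0:ℝ) < (2:ℝ) ^ Fintype.card E)]
    gcongr
    calc |∑ τ : E → Bool, f fun i => if i ∈ W then τ i else ω i|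
        ≤ ∑ τ : E → Bool, |f fun i => if i ∈ W then τ i else ω i| :=
          Finset.abs_sum_le_sum_abs _ _
      _ ≤ ∑ τ : E → Bool,
            (if pivotal J h (fun i => if i ∈ W then τ i else ω i) then (1:ℝ) else 0) :=
          Finset.sum_le_sum fun τ _ => hfb _
  -- assemble
  have step2 : ∑ S : Finset E, walshCoeff g S ^ 2 = cubeExp (fun ω => g ω ^ 2) :=
    parseval g
  have step3 : cubeExp (fun ω => g ω ^ 2) ≤ cubeExp (fun ω => p ω ^ 2) := by
    unfold cubeExp
    refine (div_le_div_iff_of_pos_right (by positivity)).mpr (Finset.sum_le_sum fun ω _ => ?_)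
    have h2 := abs_le.mp (hgb ω)
    exact sq_le_sq' h2.1 h2.2
  have hp2 : 0 ≤ cubeExp (fun ω => p ω ^ 2) := by
    unfold cubeExp
    apply div_nonneg _ (by positivity)
    exact Finset.sum_nonneg fun ω _ => sq_nonneg _
  calc ∑ S ∈ Finset.univ.filter
        (fun S : Finset E => (S ∩ J).Nonempty ∧ S ∩ W = ∅), walshCoeff h S ^ 2
      = cubeExp (fun ω => g ω ^ 2) := by rw [step1, step2]
    _ ≤ cubeExp (fun ω => p ω ^ 2) := step3
    _ ≤ 4 * cubeExp (fun ω => p ω ^ 2) := by linarith
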